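/- The sequence a_{n,k} defined by a_{1,1} = 1 and the recursions a_{n+1,k} = a_{n,k-1} + a_{n,k} + ⋯ + a_{n,n} for 2 ≤ k ≤ n+1 (interpreting a_{n,k-1}+⋯ appropriately: a_{n+1,i} = Σ_{k ≥ i−1, 1 ≤ k ≤ n} a_{n,k}) and a_{n+1,1} = a_{n,1} + ⋯ + a_{n,n}, satisfies the closed form a_{n,k} = k·(2n−k−1)! / ((n−k)!·n!) for all 1 ≤ k ≤ n. -/

import Mathlib

noncomputable def fk (n k : ℕ) : ℚ :=
  (k : ℚ) * (Nat.factorial (2 * n - k - 1) : ℚ) /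
    ((Nat.factorial (n - k) : ℚ) * (Nat.factorial n : ℚ))

lemma sum_fk (n : ℕ) (hn : 1 ≤ n) :
    ∀ j, 1 ≤ j → j ≤ n → ∑ k ∈ Finset.Icc j n, fk n k = fk (n + 1) (j + 1) := by
  have key : ∀ d j, 1 ≤ j → j + d = n → ∑ k ∈ Finset.Icc j n, fk n k = fk (n + 1) (j + 1) := by
    intro d
    induction d with
    | zero =>
      intro j hj hjn
      simp only [Nat.add_zero] at hjn
      subst hjn
      rw [Finset.Icc_self, Finset.sum_singleton]
      unfold fk
      have h1 : 2 * j - j - 1 = j - 1 := by omega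
      have h2 : 2 * (j + 1) - (j + 1) - 1 = j := by omega
      rw [h1, h2, Nat.sub_self, Nat.sub_self]
      have e1 : (Nat.factorial j : ℚ) = j * Nat.factorial (j - 1) := by
        obtain ⟨m, rfl⟩ : ∃ m, j = m + 1 := ⟨j - 1, by omega⟩
        simp only [Nat.add_sub_cancel]
        push_cast [Nat.factorial_succ]
        ring
      have e2 : (Nat.factorial (j + 1) : ℚ) = (j + 1) * Nat.factorial j := by
        push_cast [Nat.factorial_succ]; ring
      rw [e1, e2]
      have hf1 : (Nat.factorial (j - 1) : ℚ) ≠ 0 := Nat.cast_ne_zero.2 (Nat.factorial_ne_zero _)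
      have hf2 : (Nat.factorial j : ℚ) ≠ 0 := Nat.cast_ne_zero.2 (Nat.factorial_ne_zero _)
      have hj0 : (j : ℚ) ≠ 0 := by positivity
      field_simp
      rw [e1]; push_cast; ring
    | succ d ih =>
      intro j hj hjn
      have hjn' : j + 1 ≤ n := by omega
      have hstep : ∑ k ∈ Finset.Icc j n, fk n k = fk n j + ∑ k ∈ Finset.Icc (j + 1) n, fk n k := by
        have hins : Finset.Icc j n = insert j (Finset.Icc (j + 1) n) := by
          ext x; simp only [Finset.mem_Icc, Finset.mem_insert]; omega
        rw [hins, Finset.sum_insert (by simp only [Finset.mem_Icc]; omega)]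
      rw [hstep, ih (j + 1) (by omega) (by omega)]
      -- arithmetic identity
      obtain ⟨m, rfl⟩ : ∃ m, n = j + m + 1 := ⟨d, by omega⟩
      unfold fk
      have e1 : 2 * (j + m + 1) - j - 1 = j + 2 * m + 1 := by omega
      have e2 : j + m + 1 - j = m + 1 := by omega
      have e3 : 2 * (j + m + 1 + 1) - (j + 1 + 1) - 1 = j + 2 * m + 1 := by omega
      have e4 : j + m + 1 + 1 - (j + 1 + 1) = m := by omega
      have e5 : 2 * (j + m + 1 + 1) - (j + 1) - 1 = j + 2 * m + 2 := by omega
      have e6 : j + m + 1 + 1 - (j + 1) = m + 1 := by omega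
      rw [e1, e2, e3, e4, e5, e6]
      have f1 : (Nat.factorial (j + 2 * m + 2) : ℚ) = (j + 2 * m + 2) * Nat.factorial (j + 2 * m + 1) := by
        push_cast [Nat.factorial_succ]; ring
      have f2 : (Nat.factorial (m + 1) : ℚ) = (m + 1) * Nat.factorial m := by
        push_cast [Nat.factorial_succ]; ring
      have f3 : (Nat.factorial (j + m + 1 + 1) : ℚ) = (j + m + 2) * Nat.factorial (j + m + 1) := by
        push_cast [Nat.factorial_succ]; ring
      rw [f1, f2, f3]
      have h1 : (Nat.factorial (j + 2 * m + 1) : ℚ) ≠ 0 := Nat.cast_ne_zero.2 (Nat.factorial_ne_zero _)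
      have h2 : (Nat.factorial m : ℚ) ≠ 0 := Nat.cast_ne_zero.2 (Nat.factorial_ne_zero _)
      have h3 : (Nat.factorial (j + m + 1) : ℚ) ≠ 0 := Nat.cast_ne_zero.2 (Nat.factorial_ne_zero _)
      have h4 : ((m : ℚ) + 1) ≠ 0 := by positivity
      have h5 : ((j : ℚ) + m + 2) ≠ 0 := by positivity
      field_simp
      push_cast; ring
  intro j hj hjn
  exact key (n - j) j hj (by omega)

lemma fk_one_two (n : ℕ) (hn : 1 ≤ n) : fk (n + 1) 1 = fk (n + 1) 2 := by
  unfold fk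
  obtain ⟨m, rfl⟩ : ∃ m, n = m + 1 := ⟨n - 1, by omega⟩
  have e1 : 2 * (m + 1 + 1) - 1 - 1 = 2 * m + 2 := by omega
  have e2 : m + 1 + 1 - 1 = m + 1 := by omega
  have e3 : 2 * (m + 1 + 1) - 2 - 1 = 2 * m + 1 := by omega
  have e4 : m + 1 + 1 - 2 = m := by omega
  rw [e1, e2, e3, e4]
  have f1 : (Nat.factorial (2 * m + 2) : ℚ) = (2 * m + 2) * Nat.factorial (2 * m + 1) := by
    have : 2 * m + 2 = (2 * m + 1) + 1 := by omega
    rw [this]; push_cast [Nat.factorial_succ]; ring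
  have f2 : (Nat.factorial (m + 1) : ℚ) = (m + 1) * Nat.factorial m := by
    push_cast [Nat.factorial_succ]; ring
  rw [f1, f2]
  have h1 : (Nat.factorial (2 * m + 1) : ℚ) ≠ 0 := Nat.cast_ne_zero.2 (Nat.factorial_ne_zero _)
  have h2 : (Nat.factorial m : ℚ) ≠ 0 := Nat.cast_ne_zero.2 (Nat.factorial_ne_zero _)
  have h3 : ((m : ℚ) + 1) ≠ 0 := by positivity
  have h4 : (Nat.factorial (m + 1 + 1) : ℚ) ≠ 0 := Nat.cast_ne_zero.2 (Nat.factorial_ne_zero _)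
  field_simp
  ring

theorem ank_closed_form (a : ℕ → ℕ → ℚ)
    (h11 : a 1 1 = 1)
    (hrec1 : ∀ n : ℕ, 1 ≤ n → a (n + 1) 1 = ∑ k ∈ Finset.Icc 1 n, a n k)
    (hrec : ∀ n : ℕ, 1 ≤ n → ∀ i : ℕ, 2 ≤ i → i ≤ n + 1 →
      a (n + 1) i = ∑ k ∈ Finset.Icc (i - 1) n, a n k) :
    ∀ n k : ℕ, 1 ≤ k → k ≤ n →
      a n k = (k : ℚ) * (Nat.factorial (2 * n - k - 1) : ℚ) /
        ((Nat.factorial (n - k) : ℚ) * (Nat.factorial n : ℚ)) := by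
  have main : ∀ n : ℕ, 1 ≤ n → ∀ k : ℕ, 1 ≤ k → k ≤ n → a n k = fk n k := by
    intro n hn
    induction n, hn using Nat.le_induction with
    | base =>
      intro k hk hk'
      interval_cases k
      rw [h11]
      unfold fk
      norm_num [Nat.factorial]
    | succ n hn ih =>
      intro i hi hin
      rcases Nat.lt_or_ge i 2 with h2 | h2
      · interval_cases i
        rw [hrec1 n hn, Finset.sum_congr rfl (fun k hk => by
          simp only [Finset.mem_Icc] at hk; exact ih k hk.1 hk.2),
          sum_fk n hn 1 le_rfl hn]
        exact (fk_one_two n hn).symm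
      · rw [hrec n hn i h2 hin, Finset.sum_congr rfl (fun k hk => by
          simp only [Finset.mem_Icc] at hk; exact ih k (by omega) hk.2),
          sum_fk n hn (i - 1) (by omega) (by omega)]
        congr 1
        omega
  intro n k hk hkn
  rw [main n (le_trans hk hkn) k hk hkn]
  rfl
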